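/- Let T ≥ 1 and B ≥ 1, let s : {1,…,T} → ({1,…,B} → ℝ) be T blocks of attention scores and v : {1,…,T} → ({1,…,B} → ℝ^d) the corresponding blocks of value vectors. Define recursively m_1 = max_k s_1(k), l_1 = Σ_k e^{s_1(k) − m_1}, o_1 = Σ_k e^{s_1(k) − m_1} • v_1(k), and for 2 ≤ j ≤ T: m_j = max(m_{j−1}, max_k s_j(k)), l_j = e^{m_{j−1} − m_j} · l_{j−1} + Σ_k e^{s_j(k) − m_j}, and o_j = e^{m_{j−1} − m_j} • o_{j−1} + Σ_k e^{s_j(k) − m_j} • v_j(k). Then (1/l_T) • o_T = Σ_{j=1}^{T} Σ_{k=1}^{B} softmax(s)_{(j,k)} • v_j(k), where softmax(s)_{(j,k)} = e^{s_j(k)} / Σ_{j',k'} e^{s_{j'}(k')}. That is, the blockwise rescaled accumulation followed by the final division by l_T computes the exact softmax-weighted attention output. -/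

import Mathlib

/-- Online softmax correctness (full attention output): streaming over score and value
blocks `j = 0,…,T−1` (0-indexed) with running maximum `m`, rescaled exponential sum `l`,
and rescaled output accumulator `o`, the final rescaled accumulator `(1/l (T−1)) • o (T−1)`
equals the exact softmax-weighted sum of all value vectors. -/
theorem online_softmax_attention_output (T B d : ℕ) (hT : 1 ≤ T) (hB : 1 ≤ B)
    (s : Fin T → Fin B → ℝ) (v : Fin T → Fin B → (Fin d → ℝ))
    (m l : ℕ → ℝ) (o : ℕ → (Fin d → ℝ))
    (hm0 : m 0 = Finset.univ.sup' (Finset.univ_nonempty_iff.mpr ⟨⟨0, hB⟩⟩) (s ⟨0, hT⟩))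
    (hl0 : l 0 = ∑ k, Real.exp (s ⟨0, hT⟩ k - m 0))
    (ho0 : o 0 = ∑ k, Real.exp (s ⟨0, hT⟩ k - m 0) • v ⟨0, hT⟩ k)
    (hm : ∀ j : Fin T, 0 < (j : ℕ) →
        m (j : ℕ) = max (m ((j : ℕ) - 1))
          (Finset.univ.sup' (Finset.univ_nonempty_iff.mpr ⟨⟨0, hB⟩⟩) (s j)))
    (hl : ∀ j : Fin T, 0 < (j : ℕ) →
        l (j : ℕ) = Real.exp (m ((j : ℕ) - 1) - m (j : ℕ)) * l ((j : ℕ) - 1) +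
          ∑ k, Real.exp (s j k - m (j : ℕ)))
    (ho : ∀ j : Fin T, 0 < (j : ℕ) →
        o (j : ℕ) = Real.exp (m ((j : ℕ) - 1) - m (j : ℕ)) • o ((j : ℕ) - 1) +
          ∑ k, Real.exp (s j k - m (j : ℕ)) • v j k) :
    (l (T - 1))⁻¹ • o (T - 1) =
      ∑ j : Fin T, ∑ k : Fin B,
        (Real.exp (s j k) / ∑ j' : Fin T, ∑ k' : Fin B, Real.exp (s j' k')) • v j k := by
  -- invariant
  have key : ∀ n : ℕ, n < T →
      l n = (∑ i ∈ Finset.univ.filter (fun i : Fin T => (i:ℕ) ≤ n),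
              ∑ k, Real.exp (s i k - m n)) ∧
      o n = (∑ i ∈ Finset.univ.filter (fun i : Fin T => (i:ℕ) ≤ n),
              ∑ k, Real.exp (s i k - m n) • v i k) := by
    intro n
    induction n with
    | zero =>
      intro _
      have hfil : Finset.univ.filter (fun i : Fin T => (i:ℕ) ≤ 0) = {⟨0, hT⟩} := by
        ext i
        simp [Fin.ext_iff, Nat.le_zero]
      rw [hfil]
      simp [hl0, ho0]
    | succ n ih =>
      intro hn1
      have hn : n < T := by omega
      obtain ⟨ihl, iho⟩ := ih hn
      set j : Fin T := ⟨n + 1, hn1⟩ with hj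
      have hjc : (j : ℕ) = n + 1 := rfl
      have hjp : 0 < (j : ℕ) := by simp [hjc]
      have hfil : Finset.univ.filter (fun i : Fin T => (i:ℕ) ≤ n + 1) =
          insert j (Finset.univ.filter (fun i : Fin T => (i:ℕ) ≤ n)) := by
        ext i
        simp only [Finset.mem_filter, Finset.mem_univ, true_and, Finset.mem_insert,
          Fin.ext_iff, hjc]
        omega
      have hjnot : j ∉ Finset.univ.filter (fun i : Fin T => (i:ℕ) ≤ n) := by
        simp [hjc]
      constructor
      · rw [hl j hjp, hjc] at *
        simp only [Nat.add_sub_cancel]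
        rw [hfil, Finset.sum_insert hjnot, ihl, Finset.mul_sum]
        rw [add_comm]
        congr 1
        refine Finset.sum_congr rfl fun i _ => ?_
        rw [Finset.mul_sum]
        refine Finset.sum_congr rfl fun k _ => ?_
        rw [← Real.exp_add]
        ring_nf
      · rw [ho j hjp, hjc] at *
        simp only [Nat.add_sub_cancel]
        rw [hfil, Finset.sum_insert hjnot, iho, Finset.smul_sum]
        rw [add_comm]
        congr 1
        refine Finset.sum_congr rfl fun i _ => ?_
        rw [Finset.smul_sum]
        refine Finset.sum_congr rfl fun k _ => ?_
        rw [smul_smul, ← Real.exp_add]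
        ring_nf
  have hTn : T - 1 < T := by omega
  obtain ⟨hlT, hoT⟩ := key (T - 1) hTn
  have hfilT : Finset.univ.filter (fun i : Fin T => (i:ℕ) ≤ T - 1) = Finset.univ := by
    ext i
    simp only [Finset.mem_filter, Finset.mem_univ, true_and, iff_true]
    omega
  rw [hfilT] at hlT hoT
  set M := m (T - 1)
  -- positivity
  have hlpos : 0 < l (T - 1) := by
    rw [hlT]
    have h0B : (Finset.univ : Finset (Fin B)).Nonempty := ⟨⟨0, hB⟩, Finset.mem_univ _⟩
    have h0T : (Finset.univ : Finset (Fin T)).Nonempty := ⟨⟨0, hT⟩, Finset.mem_univ _⟩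
    refine Finset.sum_pos (fun i _ => Finset.sum_pos (fun k _ => Real.exp_pos _) h0B) h0T
  have hSpos : 0 < ∑ j' : Fin T, ∑ k' : Fin B, Real.exp (s j' k') := by
    have h0B : (Finset.univ : Finset (Fin B)).Nonempty := ⟨⟨0, hB⟩, Finset.mem_univ _⟩
    have h0T : (Finset.univ : Finset (Fin T)).Nonempty := ⟨⟨0, hT⟩, Finset.mem_univ _⟩
    exact Finset.sum_pos (fun i _ => Finset.sum_pos (fun k _ => Real.exp_pos _) h0B) h0T
  have hlS : l (T - 1) = (∑ j' : Fin T, ∑ k' : Fin B, Real.exp (s j' k')) * Real.exp (-M) := by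
    rw [hlT, Finset.sum_mul]
    refine Finset.sum_congr rfl fun i _ => ?_
    rw [Finset.sum_mul]
    refine Finset.sum_congr rfl fun k _ => ?_
    rw [← Real.exp_add]
    ring_nf
  rw [hoT, Finset.smul_sum]
  refine Finset.sum_congr rfl fun i _ => ?_
  rw [Finset.smul_sum]
  refine Finset.sum_congr rfl fun k _ => ?_
  rw [smul_smul]
  congr 1
  rw [hlS, Real.exp_sub]
  rw [div_eq_mul_inv, div_eq_mul_inv, mul_inv]
  have := (Real.exp_pos M).ne'
  have := hSpos.ne'
  field_simp
  rw [← Real.exp_add, neg_add_cancel, Real.exp_zero]
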